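/- Let σ = τ_λ with λ ∈ {1, x, y}, let ε ∈ {1,-1}, and let u = δ + αx + βy + γz with δ, α, β, γ ∈ O_K, σ(u) = ε·u, and ν_D(u) = 1/2 (i.e. ν_K(Nrd(u)) = 1). Then there exists an invertible t ∈ D with u = σ(t)·(βy + γz)·t; that is, the one-dimensional ε-hermitian forms ⟨u⟩ and ⟨βy + γz⟩ over (D, σ) are isometric. -/

import Mathlib

noncomputable section

/-- A surjective discrete valuation `ν : K → ℤ` on a field `K`
(the value of `ν` at `0` is irrelevant: only nonzero elements are constrained). -/
structure DVal (K : Type) [Field K] : Type where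
  ν : K → ℤ
  ν_mul : ∀ x y : K, x ≠ 0 → y ≠ 0 → ν (x * y) = ν x + ν y
  ν_add : ∀ x y : K, x ≠ 0 → y ≠ 0 → x + y ≠ 0 → min (ν x) (ν y) ≤ ν (x + y)
  ν_one : ν 1 = 0
  ν_surj : ∀ n : ℤ, ∃ x : K, x ≠ 0 ∧ ν x = n

namespace DVal

variable {K : Type} [Field K]

/-- `x` belongs to the valuation ring `O_K`. -/
def Int (V : DVal K) (x : K) : Prop := x = 0 ∨ 0 ≤ V.ν x

/-- `x` is a unit of the valuation ring `O_K`. -/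
def IntUnit (V : DVal K) (x : K) : Prop := x ≠ 0 ∧ V.ν x = 0

/-- `x` belongs to the maximal ideal `m_K` of the valuation ring `O_K`. -/
def MaxIdeal (V : DVal K) (x : K) : Prop := x = 0 ∨ 1 ≤ V.ν x

/-- `K` is complete with respect to the valuation `ν`: every Cauchy sequence converges. -/
def IsComplete (V : DVal K) : Prop :=
  ∀ f : ℕ → K,
    (∀ M : ℤ, ∃ N : ℕ, ∀ m n : ℕ, N ≤ m → N ≤ n →
      f m - f n = 0 ∨ M ≤ V.ν (f m - f n)) →
    ∃ L : K, ∀ M : ℤ, ∃ N : ℕ, ∀ n : ℕ, N ≤ n →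
      f n - L = 0 ∨ M ≤ V.ν (f n - L)

/-- The residue field `k = O_K/m_K` has characteristic different from `2`,
i.e. `2` is a unit of the valuation ring `O_K`. -/
def ResCharNeTwo (V : DVal K) : Prop := (2 : K) ≠ 0 ∧ V.ν 2 = 0

end DVal

/-- The reduced norm of a quaternion `u = δ + αx + βy + γz ∈ ℍ[K,a,b]`:
`Nrd u = u·τ(u) = δ² - aα² - bβ² + abγ²`. -/
def qnrd {K : Type} [Field K] (a b : K) (u : QuaternionAlgebra K a 0 b) : K :=
  u.re ^ 2 - a * u.imI ^ 2 - b * u.imJ ^ 2 + a * b * u.imK ^ 2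

/-- The canonical involution `τ(δ + αx + βy + γz) = δ - αx - βy - γz` of `ℍ[K,a,b]`. -/
def qtau {K : Type} [Field K] {a b : K} (u : QuaternionAlgebra K a 0 b) :
    QuaternionAlgebra K a 0 b :=
  ⟨u.re, -u.imI, -u.imJ, -u.imK⟩

/-- The norm form `⟨1,-a,-b,ab⟩` of `ℍ[K,a,b]` is anisotropic over `K`
(equivalently, `ℍ[K,a,b]` is a division ring). -/
def QAniso {K : Type} [Field K] (a b : K) : Prop :=
  ∀ d e f g : K, d ^ 2 - a * e ^ 2 - b * f ^ 2 + a * b * g ^ 2 = 0 →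
    d = 0 ∧ e = 0 ∧ f = 0 ∧ g = 0

/-- The valuation `ν_D(u) = (1/2)·ν_K(Nrd u)` of the quaternion division algebra
`D = ℍ[K,a,b]` (at nonzero `u`). -/
def qnu {K : Type} [Field K] (V : DVal K) (a b : K) (u : QuaternionAlgebra K a 0 b) : ℚ :=
  (V.ν (qnrd a b u) : ℚ) / 2

namespace Stmt4Aux


variable {K : Type} [Field K] (V : DVal K)

/-- `x = 0` or `ν x ≥ M`. -/
def Big (M : ℤ) (x : K) : Prop := x = 0 ∨ M ≤ V.ν x

variable {V}

theorem nu_neg_one : V.ν (-1 : K) = 0 := by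
  have h := V.ν_mul (-1) (-1) (by norm_num) (by norm_num)
  simp [V.ν_one] at h
  omega

theorem nu_neg {x : K} (hx : x ≠ 0) : V.ν (-x) = V.ν x := by
  have h := V.ν_mul (-1) x (by norm_num) hx
  rw [neg_one_mul] at h
  rw [h, nu_neg_one]; ring

theorem nu_inv {x : K} (hx : x ≠ 0) : V.ν x⁻¹ = - V.ν x := by
  have h := V.ν_mul x x⁻¹ hx (inv_ne_zero hx)
  rw [mul_inv_cancel₀ hx, V.ν_one] at h
  omega

theorem nu_sq {x : K} (hx : x ≠ 0) : V.ν (x ^ 2) = 2 * V.ν x := by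
  have h := V.ν_mul x x hx hx
  rw [sq]; omega

theorem big_mono {M M' : ℤ} (h : M' ≤ M) {x : K} (hx : Big V M x) : Big V M' x := by
  rcases hx with h0 | h1
  · exact Or.inl h0
  · exact Or.inr (le_trans h h1)

theorem big_neg {M : ℤ} {x : K} (hx : Big V M x) : Big V M (-x) := by
  rcases hx with h0 | h1
  · exact Or.inl (by rw [h0, neg_zero])
  · by_cases h : x = 0
    · exact Or.inl (by rw [h, neg_zero])
    · exact Or.inr (by rw [nu_neg h]; exact h1)

theorem big_add {M : ℤ} {x y : K} (hx : Big V M x) (hy : Big V M y) : Big V M (x + y) := by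
  rcases hx with h0 | h1
  · rw [h0, zero_add]; exact hy
  rcases hy with g0 | g1
  · rw [g0, add_zero]; exact Or.inr h1
  by_cases hx0 : x = 0
  · rw [hx0, zero_add]; exact Or.inr g1
  by_cases hy0 : y = 0
  · rw [hy0, add_zero]; exact Or.inr h1
  by_cases hxy : x + y = 0
  · exact Or.inl hxy
  · exact Or.inr (le_trans (le_min h1 g1) (V.ν_add x y hx0 hy0 hxy))

theorem big_sub {M : ℤ} {x y : K} (hx : Big V M x) (hy : Big V M y) : Big V M (x - y) := by
  rw [sub_eq_add_neg]; exact big_add hx (big_neg hy)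

theorem big_mul {M M' : ℤ} {x y : K} (hx : Big V M x) (hy : Big V M' y) :
    Big V (M + M') (x * y) := by
  rcases hx with h0 | h1
  · exact Or.inl (by rw [h0, zero_mul])
  rcases hy with g0 | g1
  · exact Or.inl (by rw [g0, mul_zero])
  by_cases hx0 : x = 0
  · exact Or.inl (by rw [hx0, zero_mul])
  by_cases hy0 : y = 0
  · exact Or.inl (by rw [hy0, mul_zero])
  exact Or.inr (by rw [V.ν_mul x y hx0 hy0]; omega)

theorem big_nu {M : ℤ} {x : K} (hx : x ≠ 0) (h : M ≤ V.ν x) : Big V M x := Or.inr h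

theorem big_div {M : ℤ} {x : K} (hx : Big V M x) {y : K} (hy : y ≠ 0) :
    Big V (M - V.ν y) (x / y) := by
  rw [div_eq_mul_inv]
  have : Big V (-V.ν y) y⁻¹ := Or.inr (le_of_eq (nu_inv hy).symm)
  have := big_mul hx this
  simpa [sub_eq_add_neg] using this

theorem one_add_small {t : K} (h : Big V 1 t) : 1 + t ≠ 0 ∧ V.ν (1 + t) = 0 := by
  by_cases ht0 : t = 0
  · rw [ht0, add_zero]; exact ⟨one_ne_zero, V.ν_one⟩
  rcases h with h0 | h1
  · exact absurd h0 ht0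
  have hne : (1 : K) + t ≠ 0 := by
    intro h
    have : t = -1 := by linear_combination h
    rw [this, nu_neg_one] at h1; omega
  refine ⟨hne, ?_⟩
  have h2 := V.ν_add 1 t one_ne_zero ht0 hne
  rw [V.ν_one] at h2
  have h3 := V.ν_add (1 + t) (-t) hne (neg_ne_zero.mpr ht0) (by rw [add_neg_cancel_right]; exact one_ne_zero)
  rw [add_neg_cancel_right, V.ν_one, nu_neg ht0] at h3
  omega

/-- dominance: adding something strictly bigger does not change the valuation. -/
theorem nu_add_big {x y : K} (hx : x ≠ 0) (hy : Big V (V.ν x + 1) y) :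
    x + y ≠ 0 ∧ V.ν (x + y) = V.ν x := by
  rcases hy with h0 | h1
  · rw [h0, add_zero]; exact ⟨hx, rfl⟩
  by_cases hy0 : y = 0
  · rw [hy0, add_zero]; exact ⟨hx, rfl⟩
  have hne : x + y ≠ 0 := by
    intro h
    have : y = -x := by linear_combination h
    rw [this, nu_neg hx] at h1; omega
  refine ⟨hne, ?_⟩
  have h2 := V.ν_add x y hx hy0 hne
  have h3 := V.ν_add (x + y) (-y) hne (neg_ne_zero.mpr hy0) (by rw [add_neg_cancel_right]; exact hx)
  rw [add_neg_cancel_right, nu_neg hy0] at h3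
  omega

theorem eq_zero_of_forall_big {x : K} (h : ∀ M : ℤ, Big V M x) : x = 0 := by
  by_contra hx
  rcases h (V.ν x + 1) with h0 | h1
  · exact hx h0
  · omega

theorem unit_of_near_one {g : K} (h : Big V 1 (g - 1)) : g ≠ 0 ∧ V.ν g = 0 := by
  have h1 := one_add_small h
  have e : (1 : K) + (g - 1) = g := by ring
  rw [e] at h1
  exact h1

theorem big_two (h2 : V.ResCharNeTwo) : Big V 0 (2 : K) := Or.inr (le_of_eq h2.2.symm)

theorem hensel (hcomp : V.IsComplete) (h2 : V.ResCharNeTwo) {m : K} (hm : Big V 1 m) :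
    ∃ s : K, s ^ 2 = 1 + m ∧ Big V 1 (s - 1) := by
  obtain ⟨c, hc⟩ : ∃ c : K, c = 1 + m := ⟨1 + m, rfl⟩
  obtain ⟨f, hf0, hfs⟩ : ∃ f : ℕ → K, f 0 = 1 ∧ ∀ n, f (n + 1) = (f n + c / f n) / 2 :=
    ⟨fun n => Nat.rec (motive := fun _ => K) 1 (fun _ g => (g + c / g) / 2) n, rfl, fun _ => rfl⟩
  have hinv : ∀ n, Big V 1 (f n - 1) ∧ Big V ((n : ℤ) + 1) (f n ^ 2 - c) := by
    intro n
    induction n with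
    | zero =>
      constructor
      · exact Or.inl (by rw [hf0, sub_self])
      · have : f 0 ^ 2 - c = -m := by rw [hf0, hc]; ring
        rw [this]; simpa using big_neg hm
    | succ n ih =>
      obtain ⟨ih1, ih2⟩ := ih
      obtain ⟨hg0, hgv⟩ := unit_of_near_one ih1
      have h2g : (2 : K) * f n ≠ 0 := mul_ne_zero h2.1 hg0
      have hv2g : V.ν (2 * f n) = 0 := by
        rw [V.ν_mul 2 (f n) h2.1 hg0, h2.2, hgv]; ring
      have key1 : f (n + 1) - 1 = (f n - 1) - (f n ^ 2 - c) / (2 * f n) := by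
        rw [hfs]; field_simp [hg0, h2.1]; ring
      have key2 : f (n + 1) ^ 2 - c = (f n ^ 2 - c) ^ 2 / ((2 * f n) ^ 2) := by
        rw [hfs]; field_simp [hg0, h2.1]; ring
      constructor
      · rw [key1]
        refine big_sub ih1 ?_
        have := big_div ih2 h2g
        rw [hv2g] at this
        exact big_mono (by omega) this
      · rw [key2]
        have hsq : Big V (2 * ((n : ℤ) + 1)) ((f n ^ 2 - c) ^ 2) := by
          have := big_mul ih2 ih2
          rw [sq]; exact big_mono (by omega) this
        have h2g2 : (2 * f n) ^ 2 ≠ 0 := pow_ne_zero 2 h2g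
        have hv2g2 : V.ν ((2 * f n) ^ 2) = 0 := by rw [nu_sq h2g, hv2g]; ring
        have := big_div hsq h2g2
        rw [hv2g2] at this
        exact big_mono (by push_cast; omega) this
  have hdiff : ∀ n k : ℕ, Big V ((n : ℤ) + 1) (f (n + k) - f n) := by
    intro n k
    induction k with
    | zero => exact Or.inl (by simp)
    | succ k ih =>
      have e : f (n + (k + 1)) - f n = (f (n + k + 1) - f (n + k)) + (f (n + k) - f n) := by
        have h' : n + (k + 1) = n + k + 1 := by omega
        rw [h']; ring
      rw [e]
      refine big_add ?_ ih
      obtain ⟨ih1, ih2⟩ := hinv (n + k)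
      obtain ⟨hg0, hgv⟩ := unit_of_near_one ih1
      have h2g : (2 : K) * f (n + k) ≠ 0 := mul_ne_zero h2.1 hg0
      have hv2g : V.ν (2 * f (n + k)) = 0 := by
        rw [V.ν_mul 2 (f (n + k)) h2.1 hg0, h2.2, hgv]; ring
      have key : f (n + k + 1) - f (n + k) = -((f (n + k) ^ 2 - c) / (2 * f (n + k))) := by
        rw [hfs]; field_simp [hg0, h2.1]; ring
      rw [key]
      refine big_neg ?_
      have := big_div ih2 h2g
      rw [hv2g] at this
      exact big_mono (by push_cast; omega) this
  have hbig : ∀ (M : ℤ) (i j : ℕ), M.toNat ≤ i → M.toNat ≤ j → Big V M (f i - f j) := by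
    intro M i j hi hj
    rcases le_total j i with h | h
    · obtain ⟨k, rfl⟩ := Nat.exists_eq_add_of_le h
      refine big_mono ?_ (hdiff j k)
      have := Int.self_le_toNat M
      omega
    · obtain ⟨k, rfl⟩ := Nat.exists_eq_add_of_le h
      have e : f i - f (i + k) = -(f (i + k) - f i) := by ring
      rw [e]
      refine big_neg (big_mono ?_ (hdiff i k))
      have := Int.self_le_toNat M
      omega
  obtain ⟨L, hL⟩ := hcomp f (fun M => ⟨M.toNat, fun i j hi hj => hbig M i j hi hj⟩)
  have hL1 : Big V 1 (L - 1) := by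
    obtain ⟨N, hN⟩ := hL 1
    have h1 := hN N le_rfl
    have e : L - 1 = (f N - 1) - (f N - L) := by ring
    rw [e]
    exact big_sub (hinv N).1 h1
  refine ⟨L, ?_, hL1⟩
  have hz : L ^ 2 - c = 0 := by
    refine eq_zero_of_forall_big (V := V) (fun M => ?_)
    set M' : ℤ := max M 1 with hM'
    obtain ⟨N, hN⟩ := hL M'
    set n : ℕ := max N M'.toNat with hn
    have h1 : Big V M' (f n - L) := hN n (le_max_left _ _)
    have h2' : Big V M' (f n ^ 2 - c) := by
      refine big_mono ?_ (hinv n).2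
      have h3 := Int.self_le_toNat M'
      have h4 : M'.toNat ≤ n := le_max_right _ _
      omega
    have e : L ^ 2 - c = (-(f n - L)) * (L + f n) + (f n ^ 2 - c) := by ring
    rw [e]
    refine big_mono (le_max_left M 1) (big_add ?_ h2')
    have hsum : Big V 0 (L + f n) := by
      have e2 : L + f n = (L - 1) + (f n - 1) + 2 := by ring
      rw [e2]
      exact big_add (big_add (big_mono one_pos.le hL1) (big_mono one_pos.le (hinv n).1))
        (big_two h2)
    have := big_mul (big_neg h1) hsum
    simpa using this
  rw [sub_eq_zero.mp hz, hc]

theorem solve_cd (hcomp : V.IsComplete) (h2 : V.ResCharNeTwo) (W R : K)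
    (h : Big V 1 (W * R ^ 2)) :
    ∃ c d : K, c ≠ 0 ∧ c ^ 2 + W * d ^ 2 = 1 ∧ 2 * c * d = R := by
  obtain ⟨s, hs, hs1⟩ := hensel hcomp h2 (big_neg h)
  have hsm : Big V 1 ((s - 1) / 2) := by
    have := big_div hs1 h2.1
    rwa [h2.2, sub_zero] at this
  obtain ⟨c, hcq, hc1⟩ := hensel hcomp h2 hsm
  obtain ⟨hc0, -⟩ := unit_of_near_one hc1
  refine ⟨c, R / (2 * c), hc0, ?_, ?_⟩
  · have h2c : (2 : K) * c ≠ 0 := mul_ne_zero h2.1 hc0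
    have hcq2 : 2 * c ^ 2 = s + 1 := by
      field_simp [h2.1] at hcq
      linear_combination hcq
    have expand : (2 * c) ^ 2 * (c ^ 2 + W * (R / (2 * c)) ^ 2) = 4 * c ^ 4 + W * R ^ 2 := by
      field_simp [hc0, h2.1]
      ring
    have hid : (2 * c) ^ 2 * (c ^ 2 + W * (R / (2 * c)) ^ 2) = (2 * c) ^ 2 * 1 := by
      rw [expand]
      linear_combination (2 * c ^ 2 + s - 1) * hcq2 + hs
    exact mul_left_cancel₀ (pow_ne_zero 2 h2c) hid
  · field_simp [hc0, h2.1]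


theorem big_sq2 {x : K} (h : Big V 1 x) : Big V 2 (x ^ 2) := by
  rw [sq]; simpa using big_mul h h

theorem big_sq0 {x : K} (h : Big V 0 x) : Big V 0 (x ^ 2) := by
  rw [sq]; simpa using big_mul h h

theorem half_zero (h2 : (2 : K) ≠ 0) {x : K} (h : 2 * x = 0) : x = 0 := by
  rcases mul_eq_zero.mp h with h' | h'
  · exact absurd h' h2
  · exact h'

theorem nu_of_unit_sq {a : K} (ha0 : a ≠ 0) (hva : V.ν a = 0) {x : K} (hx : x ≠ 0) :
    V.ν (a * x ^ 2) = 2 * V.ν x := by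
  rw [V.ν_mul a (x ^ 2) ha0 (pow_ne_zero 2 hx), hva, nu_sq hx]; ring

/-- Binary anisotropy modulo the maximal ideal: if `x, y ∈ O_K` are not both in `m_K`
then `x² - a y²` is a unit of `O_K`. -/
theorem Lbin (hcomp : V.IsComplete) (h2 : V.ResCharNeTwo) {a b : K} (haniso : QAniso a b)
    (ha0 : a ≠ 0) (hva : V.ν a = 0) {x y : K} (bx : Big V 0 x) (byy : Big V 0 y)
    (h : ¬(Big V 1 x ∧ Big V 1 y)) : x ^ 2 - a * y ^ 2 ≠ 0 ∧ V.ν (x ^ 2 - a * y ^ 2) = 0 := by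
  have hnsq : ∀ r : K, r ^ 2 ≠ a := by
    intro r hr
    obtain ⟨-, h1, -, -⟩ := haniso r 1 0 0 (by linear_combination hr)
    exact one_ne_zero h1
  by_cases hx1 : Big V 1 x
  · have hy1 : ¬Big V 1 y := fun hy => h ⟨hx1, hy⟩
    simp only [Big, not_or, not_le] at hy1
    obtain ⟨hy0, hylt⟩ := hy1
    have hνy : V.ν y = 0 := by
      rcases byy with h' | h'
      · exact absurd h' hy0
      · omega
    have hay : a * y ^ 2 ≠ 0 := mul_ne_zero ha0 (pow_ne_zero 2 hy0)
    have hay0 : -(a * y ^ 2) ≠ 0 := neg_ne_zero.mpr hay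
    have hayν : V.ν (-(a * y ^ 2)) = 0 := by
      rw [nu_neg hay, nu_of_unit_sq ha0 hva hy0, hνy]; ring
    have hdom := nu_add_big hay0
      (by rw [hayν, zero_add]; exact big_mono (by omega) (big_sq2 hx1))
    have he : -(a * y ^ 2) + x ^ 2 = x ^ 2 - a * y ^ 2 := by ring
    rw [he] at hdom
    exact ⟨hdom.1, by rw [hdom.2, hayν]⟩
  · simp only [Big, not_or, not_le] at hx1
    obtain ⟨hx0, hxlt⟩ := hx1
    have hνx : V.ν x = 0 := by
      rcases bx with h' | h'
      · exact absurd h' hx0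
      · omega
    have hx20 : x ^ 2 ≠ 0 := pow_ne_zero 2 hx0
    have hx2ν : V.ν (x ^ 2) = 0 := by rw [nu_sq hx0, hνx]; ring
    by_cases hy1 : Big V 1 y
    · have hay2 : Big V 2 (a * y ^ 2) := by
        have := big_mul (Or.inr (le_of_eq hva.symm) : Big V 0 a) (big_sq2 hy1)
        exact big_mono (by omega) this
      have hdom := nu_add_big hx20
        (by rw [hx2ν, zero_add]; exact big_mono (by omega) (big_neg hay2))
      have he : x ^ 2 + -(a * y ^ 2) = x ^ 2 - a * y ^ 2 := by ring
      rw [he] at hdom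
      exact ⟨hdom.1, by rw [hdom.2, hx2ν]⟩
    · simp only [Big, not_or, not_le] at hy1
      obtain ⟨hy0, hylt⟩ := hy1
      have hνy : V.ν y = 0 := by
        rcases byy with h' | h'
        · exact absurd h' hy0
        · omega
      have hF0 : x ^ 2 - a * y ^ 2 ≠ 0 := by
        intro h'
        exact hnsq (x / y) (by field_simp; linear_combination h')
      refine ⟨hF0, ?_⟩
      by_contra hne
      have baY : Big V 0 (a * y ^ 2) := by
        simpa using big_mul (Or.inr (le_of_eq hva.symm) : Big V 0 a) (big_sq0 byy)
      have bF : Big V 0 (x ^ 2 - a * y ^ 2) := big_sub (big_sq0 bx) baY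
      have hνF : 1 ≤ V.ν (x ^ 2 - a * y ^ 2) := by
        rcases bF with h' | h'
        · exact absurd h' hF0
        · omega
      have hmbig : Big V 1 ((x ^ 2 - a * y ^ 2) / x ^ 2) := by
        have := big_div (Or.inr hνF : Big V 1 (x ^ 2 - a * y ^ 2)) hx20
        rw [hx2ν] at this
        simpa using this
      obtain ⟨s, hs, -⟩ := hensel hcomp h2 (big_neg hmbig)
      have hs2 : s ^ 2 * x ^ 2 = a * y ^ 2 := by
        field_simp at hs
        linear_combination hs
      apply hnsq (s * x / y)
      rw [div_pow, mul_pow, hs2]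
      field_simp



theorem isUnit_of_ne_zero {a b : K} (haniso : QAniso a b) {t : QuaternionAlgebra K a 0 b}
    (ht : t ≠ 0) : IsUnit t := by
  have hn : qnrd a b t ≠ 0 := by
    intro h
    obtain ⟨h1, h2, h3, h4⟩ := haniso t.re t.imI t.imJ t.imK h
    exact ht (QuaternionAlgebra.ext h1 h2 h3 h4)
  have hn' : t.re ^ 2 - a * t.imI ^ 2 - b * t.imJ ^ 2 + a * b * t.imK ^ 2 ≠ 0 := hn
  refine isUnit_iff_exists.mpr ⟨(qnrd a b t)⁻¹ • qtau t, ?_, ?_⟩ <;>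
    (apply QuaternionAlgebra.ext <;> simp [qtau, qnrd] <;> field_simp <;> ring)

theorem quatA (a ϖ α β γ c d : K)
    (h1 : c ^ 2 + (-(a * ϖ * (β ^ 2 - a * γ ^ 2))) * d ^ 2 = 1)
    (h2 : 2 * c * d * (-(ϖ * (β ^ 2 - a * γ ^ 2))) = α) :
    (⟨0, α, β, γ⟩ : QuaternionAlgebra K a 0 ϖ) =
      qtau (⟨c, 0, d * (a * γ), d * β⟩ : QuaternionAlgebra K a 0 ϖ) * ⟨0, 0, β, γ⟩ *
        ⟨c, 0, d * (a * γ), d * β⟩ := by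
  refine QuaternionAlgebra.ext ?_ ?_ ?_ ?_
  · show (0 : K) = _
    simp [qtau]
    ring
  · show α = _
    simp [qtau]
    linear_combination -h2
  · show β = _
    simp [qtau]
    linear_combination -β * h1
  · show γ = _
    simp [qtau]
    linear_combination -γ * h1

theorem quatB (a ϖ δ β γ c d : K)
    (h1 : c ^ 2 + (ϖ * (β ^ 2 - a * γ ^ 2)) * d ^ 2 = 1)
    (h2 : 2 * c * d * (ϖ * (β ^ 2 - a * γ ^ 2)) = δ) :
    (⟨δ, 0, β, γ⟩ : QuaternionAlgebra K a 0 ϖ) =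
      (⟨c, 0, d * β, d * γ⟩ : QuaternionAlgebra K a 0 ϖ) * ⟨0, 0, β, γ⟩ *
        ⟨c, 0, d * β, d * γ⟩ := by
  refine QuaternionAlgebra.ext ?_ ?_ ?_ ?_
  · show δ = _
    simp
    linear_combination -h2
  · show (0 : K) = _
    simp
    ring
  · show β = _
    simp
    linear_combination -β * h1
  · show γ = _
    simp
    linear_combination -γ * h1

theorem quatC (a ϖ δ α γ c d : K)
    (h1 : c ^ 2 + (ϖ * (a * α * γ) ^ 2 - a * ϖ * (δ * γ) ^ 2) * d ^ 2 = 1)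
    (h2 : 2 * c * d * (a * ϖ * γ ^ 2) = 1) :
    (⟨δ, α, 0, γ⟩ : QuaternionAlgebra K a 0 ϖ) =
      (⟨c, 0, -(d * (a * α * γ)), -(d * (δ * γ))⟩ : QuaternionAlgebra K a 0 ϖ) * ⟨0, 0, 0, γ⟩ *
        ⟨c, 0, d * (a * α * γ), -(d * (δ * γ))⟩ := by
  refine QuaternionAlgebra.ext ?_ ?_ ?_ ?_
  · show δ = _
    simp
    linear_combination -δ * h2
  · show α = _
    simp
    linear_combination -α * h2
  · show (0 : K) = _
    simp
    ring
  · show γ = _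
    simp
    linear_combination -γ * h1


theorem mu_eq {a b : K} {lam mu w : QuaternionAlgebra K a 0 b} (hw : lam * w = 1)
    (hmu' : mu * lam = 1) : mu = w := by
  calc mu = mu * (lam * w) := by rw [hw, mul_one]
  _ = (mu * lam) * w := by rw [mul_assoc]
  _ = w := by rw [hmu', one_mul]

theorem x_inv {a b : K} (ha : a ≠ 0) :
    (⟨0, 1, 0, 0⟩ : QuaternionAlgebra K a 0 b) * ⟨0, a⁻¹, 0, 0⟩ = 1 := by
  refine QuaternionAlgebra.ext ?_ ?_ ?_ ?_ <;> simp <;> field_simp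

theorem y_inv {a b : K} (hb : b ≠ 0) :
    (⟨0, 0, 1, 0⟩ : QuaternionAlgebra K a 0 b) * ⟨0, 0, b⁻¹, 0⟩ = 1 := by
  refine QuaternionAlgebra.ext ?_ ?_ ?_ ?_ <;> simp <;> field_simp

theorem sigmaB {a b : K} (ha : a ≠ 0) (r i j k : K) :
    (⟨0, 1, 0, 0⟩ : QuaternionAlgebra K a 0 b) * qtau ⟨r, i, j, k⟩ * ⟨0, a⁻¹, 0, 0⟩ =
      ⟨r, -i, j, k⟩ := by
  refine QuaternionAlgebra.ext ?_ ?_ ?_ ?_ <;> simp [qtau] <;> field_simp <;> ring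

theorem sigmaC {a b : K} (hb : b ≠ 0) (r i j k : K) :
    (⟨0, 0, 1, 0⟩ : QuaternionAlgebra K a 0 b) * qtau ⟨r, i, j, k⟩ * ⟨0, 0, b⁻¹, 0⟩ =
      ⟨r, i, -j, k⟩ := by
  refine QuaternionAlgebra.ext ?_ ?_ ?_ ?_ <;> simp [qtau] <;> field_simp <;> ring

theorem qtau_one {a b : K} : qtau (1 : QuaternionAlgebra K a 0 b) = 1 := by
  refine QuaternionAlgebra.ext ?_ ?_ ?_ ?_ <;> simp [qtau]

end Stmt4Aux

open Stmt4Aux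

/-- a ramified diagonal entry `u = δ + αx + βy + γz` (of value `1/2`)
of an ε-hermitian form over `(D, τ_λ)`, `λ ∈ {1,x,y}`, is isometric to `βy + γz`. -/
theorem stmt_4 (K : Type) [Field K] (V : DVal K)
    -- K is complete with residue field of characteristic ≠ 2
    (hcomp : V.IsComplete) (hchar : V.ResCharNeTwo)
    -- D = ℍ[K,a,ϖ] with a ∈ O_K^×, ϖ a uniformizer, D a division ring
    (a ϖ : K) (ha0 : a ≠ 0) (hva : V.ν a = 0) (hϖ0 : ϖ ≠ 0) (hvϖ : V.ν ϖ = 1)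
    (haniso : QAniso a ϖ)
    -- σ = τ_λ with λ ∈ {1, x, y} (μ = λ⁻¹)
    (lam mu : QuaternionAlgebra K a 0 ϖ)
    (hlam : lam = 1 ∨ lam = (⟨0, 1, 0, 0⟩ : QuaternionAlgebra K a 0 ϖ) ∨ lam = (⟨0, 0, 1, 0⟩ : QuaternionAlgebra K a 0 ϖ))
    (hmu : lam * mu = 1) (hmu' : mu * lam = 1)
    (σ : QuaternionAlgebra K a 0 ϖ → QuaternionAlgebra K a 0 ϖ)
    (hσ : ∀ u, σ u = lam * qtau u * mu)
    -- ε ∈ {1, -1}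
    (ε : K) (hε : ε = 1 ∨ ε = -1)
    -- u = δ + αx + βy + γz with coordinates in O_K, σ(u) = ε·u, ν_D(u) = 1/2
    (δ α β γ : K) (hδ : V.Int δ) (hα : V.Int α) (hβ : V.Int β) (hγ : V.Int γ)
    (hu0 : (⟨δ, α, β, γ⟩ : QuaternionAlgebra K a 0 ϖ) ≠ 0)
    (hsym : σ ⟨δ, α, β, γ⟩ = ε • (⟨δ, α, β, γ⟩ : QuaternionAlgebra K a 0 ϖ))
    (hval : qnu V a ϖ (⟨δ, α, β, γ⟩ : QuaternionAlgebra K a 0 ϖ) = 1 / 2) :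
    ∃ t : QuaternionAlgebra K a 0 ϖ, IsUnit t ∧
      (⟨δ, α, β, γ⟩ : QuaternionAlgebra K a 0 ϖ) =
        σ t * (⟨0, 0, β, γ⟩ : QuaternionAlgebra K a 0 ϖ) * t := by
  have h2K : (2 : K) ≠ 0 := hchar.1
  have bigA : Big V 0 a := Or.inr (le_of_eq hva.symm)
  have bigP : Big V 1 ϖ := Or.inr (le_of_eq hvϖ.symm)
  have bδ : Big V 0 δ := hδ
  have bα : Big V 0 α := hα
  have bβ : Big V 0 β := hβ
  have bγ : Big V 0 γ := hγ
  have hnrd0 : qnrd a ϖ (⟨δ, α, β, γ⟩ : QuaternionAlgebra K a 0 ϖ) ≠ 0 := by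
    intro h
    obtain ⟨h1, h2, h3, h4⟩ := haniso δ α β γ h
    exact hu0 (QuaternionAlgebra.ext h1 h2 h3 h4)
  have hν1 : V.ν (qnrd a ϖ (⟨δ, α, β, γ⟩ : QuaternionAlgebra K a 0 ϖ)) = 1 := by
    have h' := hval
    unfold qnu at h'
    have h2' : ((V.ν (qnrd a ϖ (⟨δ, α, β, γ⟩ : QuaternionAlgebra K a 0 ϖ)) : ℚ)) = 1 := by
      linarith
    exact_mod_cast h2'
  have hq : qnrd a ϖ (⟨δ, α, β, γ⟩ : QuaternionAlgebra K a 0 ϖ)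
      = δ ^ 2 - a * α ^ 2 - ϖ * β ^ 2 + a * ϖ * γ ^ 2 := rfl
  have bE : Big V 0 (β ^ 2 - a * γ ^ 2) :=
    big_sub (big_sq0 bβ) (by simpa using big_mul bigA (big_sq0 bγ))
  rcases hlam with hl | hl | hl
  · -- CASE λ = 1
    have hmueq : mu = 1 := mu_eq (by rw [hl, one_mul]) hmu'
    rw [hσ, hl, hmueq, one_mul, mul_one] at hsym
    have hRe : δ = ε * δ := by simpa [qtau] using congrArg QuaternionAlgebra.re hsym
    have hI : -α = ε * α := by simpa [qtau] using congrArg QuaternionAlgebra.imI hsym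
    have hJ : -β = ε * β := by simpa [qtau] using congrArg QuaternionAlgebra.imJ hsym
    have hKk : -γ = ε * γ := by simpa [qtau] using congrArg QuaternionAlgebra.imK hsym
    rcases hε with rfl | rfl
    · -- ε = 1 : impossible
      exfalso
      have hα0 : α = 0 := half_zero h2K (by linear_combination -hI)
      have hβ0 : β = 0 := half_zero h2K (by linear_combination -hJ)
      have hγ0 : γ = 0 := half_zero h2K (by linear_combination -hKk)
      have hδ0 : δ ≠ 0 := by
        intro h
        exact hu0 (by apply QuaternionAlgebra.ext <;> simp [h, hα0, hβ0, hγ0])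
      have he : qnrd a ϖ (⟨δ, α, β, γ⟩ : QuaternionAlgebra K a 0 ϖ) = δ ^ 2 := by
        rw [hq, hα0, hβ0, hγ0]; ring
      rw [he, nu_sq hδ0] at hν1
      omega
    · -- ε = -1
      have hδ0 : δ = 0 := half_zero h2K (by linear_combination hRe)
      have bα1 : Big V 1 α := by
        by_contra hcon
        simp only [Big, not_or, not_le] at hcon
        obtain ⟨hα0, hαlt⟩ := hcon
        have hνα : V.ν α = 0 := by
          rcases bα with h' | h'
          · exact absurd h' hα0
          · omega
        have haα : a * α ^ 2 ≠ 0 := mul_ne_zero ha0 (pow_ne_zero 2 hα0)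
        have hxne : -(a * α ^ 2) ≠ 0 := neg_ne_zero.mpr haα
        have hxν : V.ν (-(a * α ^ 2)) = 0 := by
          rw [nu_neg haα, nu_of_unit_sq ha0 hva hα0, hνα]; ring
        have hy : Big V 1 (-(ϖ * (β ^ 2 - a * γ ^ 2))) :=
          big_neg (by simpa using big_mul bigP bE)
        have hdom := nu_add_big hxne (by rw [hxν, zero_add]; exact hy)
        have he : -(a * α ^ 2) + -(ϖ * (β ^ 2 - a * γ ^ 2))
            = qnrd a ϖ (⟨δ, α, β, γ⟩ : QuaternionAlgebra K a 0 ϖ) := by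
          rw [hq, hδ0]; ring
        rw [he] at hdom
        rw [hdom.2, hxν] at hν1
        exact absurd hν1 (by norm_num)
      have hE0 : β ^ 2 - a * γ ^ 2 ≠ 0 := by
        intro h
        obtain ⟨hb, hg, -, -⟩ := haniso β γ 0 0 (by linear_combination h)
        by_cases hα0 : α = 0
        · exact hu0 (by apply QuaternionAlgebra.ext <;> simp [hδ0, hα0, hb, hg])
        · have he : qnrd a ϖ (⟨δ, α, β, γ⟩ : QuaternionAlgebra K a 0 ϖ) = -(a * α ^ 2) := by
            rw [hq, hδ0, hb, hg]; ring
          rw [he, nu_neg (mul_ne_zero ha0 (pow_ne_zero 2 hα0)),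
            nu_of_unit_sq ha0 hva hα0] at hν1
          omega
      have hNne : ϖ * (β ^ 2 - a * γ ^ 2) ≠ 0 := mul_ne_zero hϖ0 hE0
      have hqne : -(qnrd a ϖ (⟨δ, α, β, γ⟩ : QuaternionAlgebra K a 0 ϖ)) ≠ 0 :=
        neg_ne_zero.mpr hnrd0
      have hxν : V.ν (-(qnrd a ϖ (⟨δ, α, β, γ⟩ : QuaternionAlgebra K a 0 ϖ))) = 1 := by
        rw [nu_neg hnrd0, hν1]
      have hy2 : Big V 2 (-(a * α ^ 2)) :=
        big_neg (big_mono (by omega) (big_mul bigA (big_sq2 bα1)))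
      have hdom := nu_add_big hqne (by rw [hxν]; exact big_mono (by omega) hy2)
      have he : -(qnrd a ϖ (⟨δ, α, β, γ⟩ : QuaternionAlgebra K a 0 ϖ)) + -(a * α ^ 2)
          = ϖ * (β ^ 2 - a * γ ^ 2) := by
        rw [hq, hδ0]; ring
      rw [he, hxν] at hdom
      have hWR : (-(a * ϖ * (β ^ 2 - a * γ ^ 2))) * (α / (-(ϖ * (β ^ 2 - a * γ ^ 2)))) ^ 2
          = (-(a * α ^ 2)) / (ϖ * (β ^ 2 - a * γ ^ 2)) := by
        field_simp
      have hbigWR : Big V 1 ((-(a * ϖ * (β ^ 2 - a * γ ^ 2)))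
          * (α / (-(ϖ * (β ^ 2 - a * γ ^ 2)))) ^ 2) := by
        rw [hWR]
        have hd := big_div hy2 hNne
        rw [hdom.2] at hd
        exact big_mono (by omega) hd
      obtain ⟨c, d, hc0, h1, h2R⟩ := solve_cd hcomp hchar
        (-(a * ϖ * (β ^ 2 - a * γ ^ 2))) (α / (-(ϖ * (β ^ 2 - a * γ ^ 2)))) hbigWR
      rw [eq_div_iff (neg_ne_zero.mpr hNne)] at h2R
      refine ⟨⟨c, 0, d * (a * γ), d * β⟩, ?_, ?_⟩
      · refine isUnit_of_ne_zero haniso ?_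
        intro h
        exact hc0 (by simpa using congrArg QuaternionAlgebra.re h)
      · rw [hσ, hl, hmueq, one_mul, mul_one, hδ0]
        exact quatA a ϖ α β γ c d h1 h2R
  · -- CASE λ = x
    have hmueq : mu = ⟨0, a⁻¹, 0, 0⟩ := mu_eq (by rw [hl]; exact x_inv ha0) hmu'
    rw [hσ, hl, hmueq, sigmaB ha0 δ α β γ] at hsym
    have hRe : δ = ε * δ := by simpa using congrArg QuaternionAlgebra.re hsym
    have hI : -α = ε * α := by simpa using congrArg QuaternionAlgebra.imI hsym
    have hJ : β = ε * β := by simpa using congrArg QuaternionAlgebra.imJ hsym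
    have hKk : γ = ε * γ := by simpa using congrArg QuaternionAlgebra.imK hsym
    rcases hε with rfl | rfl
    · -- ε = 1
      have hα0 : α = 0 := half_zero h2K (by linear_combination -hI)
      have bδ1 : Big V 1 δ := by
        by_contra hcon
        simp only [Big, not_or, not_le] at hcon
        obtain ⟨hδ0', hδlt⟩ := hcon
        have hνδ : V.ν δ = 0 := by
          rcases bδ with h' | h'
          · exact absurd h' hδ0'
          · omega
        have hx2 : δ ^ 2 ≠ 0 := pow_ne_zero 2 hδ0'
        have hx2ν : V.ν (δ ^ 2) = 0 := by rw [nu_sq hδ0', hνδ]; ring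
        have hy : Big V 1 (-(ϖ * (β ^ 2 - a * γ ^ 2))) :=
          big_neg (by simpa using big_mul bigP bE)
        have hdom := nu_add_big hx2 (by rw [hx2ν, zero_add]; exact hy)
        have he : δ ^ 2 + -(ϖ * (β ^ 2 - a * γ ^ 2))
            = qnrd a ϖ (⟨δ, α, β, γ⟩ : QuaternionAlgebra K a 0 ϖ) := by
          rw [hq, hα0]; ring
        rw [he] at hdom
        rw [hdom.2, hx2ν] at hν1
        exact absurd hν1 (by norm_num)
      have hE0 : β ^ 2 - a * γ ^ 2 ≠ 0 := by
        intro h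
        obtain ⟨hb, hg, -, -⟩ := haniso β γ 0 0 (by linear_combination h)
        have hδne : δ ≠ 0 := by
          intro h'
          exact hu0 (by apply QuaternionAlgebra.ext <;> simp [h', hα0, hb, hg])
        have he : qnrd a ϖ (⟨δ, α, β, γ⟩ : QuaternionAlgebra K a 0 ϖ) = δ ^ 2 := by
          rw [hq, hα0, hb, hg]; ring
        rw [he, nu_sq hδne] at hν1
        omega
      have hNne : ϖ * (β ^ 2 - a * γ ^ 2) ≠ 0 := mul_ne_zero hϖ0 hE0
      have hqne : -(qnrd a ϖ (⟨δ, α, β, γ⟩ : QuaternionAlgebra K a 0 ϖ)) ≠ 0 :=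
        neg_ne_zero.mpr hnrd0
      have hxν : V.ν (-(qnrd a ϖ (⟨δ, α, β, γ⟩ : QuaternionAlgebra K a 0 ϖ))) = 1 := by
        rw [nu_neg hnrd0, hν1]
      have b2δ : Big V 2 (δ ^ 2) := big_sq2 bδ1
      have hdom := nu_add_big hqne (by rw [hxν]; exact big_mono (by omega) b2δ)
      have he : -(qnrd a ϖ (⟨δ, α, β, γ⟩ : QuaternionAlgebra K a 0 ϖ)) + δ ^ 2
          = ϖ * (β ^ 2 - a * γ ^ 2) := by
        rw [hq, hα0]; ring
      rw [he, hxν] at hdom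
      have hWR : (ϖ * (β ^ 2 - a * γ ^ 2)) * (δ / (ϖ * (β ^ 2 - a * γ ^ 2))) ^ 2
          = δ ^ 2 / (ϖ * (β ^ 2 - a * γ ^ 2)) := by
        field_simp
      have hbigWR : Big V 1 ((ϖ * (β ^ 2 - a * γ ^ 2))
          * (δ / (ϖ * (β ^ 2 - a * γ ^ 2))) ^ 2) := by
        rw [hWR]
        have hd := big_div b2δ hNne
        rw [hdom.2] at hd
        exact big_mono (by omega) hd
      obtain ⟨c, d, hc0, h1, h2R⟩ := solve_cd hcomp hchar
        (ϖ * (β ^ 2 - a * γ ^ 2)) (δ / (ϖ * (β ^ 2 - a * γ ^ 2))) hbigWR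
      rw [eq_div_iff hNne] at h2R
      refine ⟨⟨c, 0, d * β, d * γ⟩, ?_, ?_⟩
      · refine isUnit_of_ne_zero haniso ?_
        intro h
        exact hc0 (by simpa using congrArg QuaternionAlgebra.re h)
      · rw [hσ, hl, hmueq, sigmaB ha0 c 0 (d * β) (d * γ), neg_zero, hα0]
        exact quatB a ϖ δ β γ c d h1 h2R
    · -- ε = -1 : impossible
      exfalso
      have hδ0 : δ = 0 := half_zero h2K (by linear_combination hRe)
      have hβ0 : β = 0 := half_zero h2K (by linear_combination hJ)
      have hγ0 : γ = 0 := half_zero h2K (by linear_combination hKk)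
      have hα0 : α ≠ 0 := by
        intro h
        exact hu0 (by apply QuaternionAlgebra.ext <;> simp [hδ0, h, hβ0, hγ0])
      have he : qnrd a ϖ (⟨δ, α, β, γ⟩ : QuaternionAlgebra K a 0 ϖ) = -(a * α ^ 2) := by
        rw [hq, hδ0, hβ0, hγ0]; ring
      rw [he, nu_neg (mul_ne_zero ha0 (pow_ne_zero 2 hα0)),
        nu_of_unit_sq ha0 hva hα0] at hν1
      omega
  · -- CASE λ = y
    have hmueq : mu = ⟨0, 0, ϖ⁻¹, 0⟩ := mu_eq (by rw [hl]; exact y_inv hϖ0) hmu'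
    rw [hσ, hl, hmueq, sigmaC hϖ0 δ α β γ] at hsym
    have hRe : δ = ε * δ := by simpa using congrArg QuaternionAlgebra.re hsym
    have hI : α = ε * α := by simpa using congrArg QuaternionAlgebra.imI hsym
    have hJ : -β = ε * β := by simpa using congrArg QuaternionAlgebra.imJ hsym
    have hKk : γ = ε * γ := by simpa using congrArg QuaternionAlgebra.imK hsym
    rcases hε with rfl | rfl
    · -- ε = 1
      have hβ0 : β = 0 := half_zero h2K (by linear_combination -hJ)
      have hB : Big V 1 δ ∧ Big V 1 α := by
        by_contra hcon
        obtain ⟨hF0, hFν⟩ := Lbin hcomp hchar haniso ha0 hva bδ bα hcon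
        have hy : Big V 1 (a * ϖ * γ ^ 2) :=
          big_mono (by omega) (big_mul (big_mul bigA bigP) (big_sq0 bγ))
        have hdom := nu_add_big hF0 (by rw [hFν, zero_add]; exact hy)
        have he : (δ ^ 2 - a * α ^ 2) + a * ϖ * γ ^ 2
            = qnrd a ϖ (⟨δ, α, β, γ⟩ : QuaternionAlgebra K a 0 ϖ) := by
          rw [hq, hβ0]; ring
        rw [he] at hdom
        rw [hdom.2, hFν] at hν1
        exact absurd hν1 (by norm_num)
      obtain ⟨bδ1, bα1⟩ := hB
      have bF2 : Big V 2 (δ ^ 2 - a * α ^ 2) :=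
        big_sub (big_sq2 bδ1) (big_mono (by omega) (big_mul bigA (big_sq2 bα1)))
      have hdom := nu_add_big hnrd0 (by rw [hν1]; exact big_mono (by omega) (big_neg bF2))
      have he : qnrd a ϖ (⟨δ, α, β, γ⟩ : QuaternionAlgebra K a 0 ϖ) + -(δ ^ 2 - a * α ^ 2)
          = a * ϖ * γ ^ 2 := by
        rw [hq, hβ0]; ring
      rw [he, hν1] at hdom
      have hγne : γ ≠ 0 := by
        intro h
        exact hdom.1 (by rw [h]; ring)
      have hνγ : V.ν γ = 0 := by
        have h1' := hdom.2
        rw [V.ν_mul (a * ϖ) (γ ^ 2) (mul_ne_zero ha0 hϖ0) (pow_ne_zero 2 hγne),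
          V.ν_mul a ϖ ha0 hϖ0, hva, hvϖ, nu_sq hγne] at h1'
        omega
      have hNCne : a * ϖ * γ ^ 2 ≠ 0 := mul_ne_zero (mul_ne_zero ha0 hϖ0) (pow_ne_zero 2 hγne)
      have hWR : (ϖ * (a * α * γ) ^ 2 - a * ϖ * (δ * γ) ^ 2) * (1 / (a * ϖ * γ ^ 2)) ^ 2
          = (a * α ^ 2 - δ ^ 2) / (a * ϖ * γ ^ 2) := by
        field_simp
      have hbigWR : Big V 1 ((ϖ * (a * α * γ) ^ 2 - a * ϖ * (δ * γ) ^ 2)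
          * (1 / (a * ϖ * γ ^ 2)) ^ 2) := by
        rw [hWR]
        have hnum : Big V 2 (a * α ^ 2 - δ ^ 2) :=
          big_sub (big_mono (by omega) (big_mul bigA (big_sq2 bα1))) (big_sq2 bδ1)
        have hd := big_div hnum hNCne
        rw [hdom.2] at hd
        exact big_mono (by omega) hd
      obtain ⟨c, d, hc0, h1, h2R⟩ := solve_cd hcomp hchar
        (ϖ * (a * α * γ) ^ 2 - a * ϖ * (δ * γ) ^ 2) (1 / (a * ϖ * γ ^ 2)) hbigWR
      rw [eq_div_iff hNCne] at h2R
      refine ⟨⟨c, 0, d * (a * α * γ), -(d * (δ * γ))⟩, ?_, ?_⟩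
      · refine isUnit_of_ne_zero haniso ?_
        intro h
        exact hc0 (by simpa using congrArg QuaternionAlgebra.re h)
      · rw [hσ, hl, hmueq, sigmaC hϖ0 c 0 (d * (a * α * γ)) (-(d * (δ * γ))), hβ0]
        exact quatC a ϖ δ α γ c d h1 h2R
    · -- ε = -1 : t = 1
      have hδ0 : δ = 0 := half_zero h2K (by linear_combination hRe)
      have hα0 : α = 0 := half_zero h2K (by linear_combination hI)
      have hγ0 : γ = 0 := half_zero h2K (by linear_combination hKk)
      refine ⟨1, isUnit_one, ?_⟩
      rw [hσ, qtau_one]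
      simp only [mul_one]
      rw [hmu, one_mul]
      apply QuaternionAlgebra.ext <;> simp [hδ0, hα0, hγ0]
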